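/- Let T > μ > 0 and let a₁ = (5T, y₁), a₂ = (5T, y₂) with y₁ ≤ y₂, y₁, y₂ ∈ [−μ/2, μ/2], and a₃ = (x₃, y₃), a₄ = (x₃, y₄) ∈ [−T,T]² with y₄ − y₃ ≥ μ. Let ℓ₁ be the segment from a₁ to b and ℓ₂ the segment from a₂ to c where {b,c} = {a₃,a₄}, b ≠ c. Let d₁, d₂ be the points where ℓ₁, ℓ₂ respectively meet the vertical line x = T (the right side of the square [−T,T]²). Then ‖d₁ − d₂‖ ≥ μ/3. -/

import Mathlib

open Metric Set Real

set_option maxHeartbeats 1000000 in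
theorem stmt16 (T μ : ℝ) (hμ : 0 < μ) (hT : μ < T)
    (a₁ a₂ a₃ a₄ b c : EuclideanSpace ℝ (Fin 2))
    (ha₁0 : a₁ 0 = 5 * T) (ha₂0 : a₂ 0 = 5 * T)
    (h12 : a₁ 1 ≤ a₂ 1)
    (h1I : a₁ 1 ∈ Set.Icc (-(μ / 2)) (μ / 2)) (h2I : a₂ 1 ∈ Set.Icc (-(μ / 2)) (μ / 2))
    (h34 : a₃ 0 = a₄ 0) (h34y : μ ≤ a₄ 1 - a₃ 1)
    (ha₃B : |a₃ 0| ≤ T ∧ |a₃ 1| ≤ T) (ha₄B : |a₄ 0| ≤ T ∧ |a₄ 1| ≤ T)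
    (hbc : (b = a₃ ∧ c = a₄) ∨ (b = a₄ ∧ c = a₃))
    (d₁ d₂ : EuclideanSpace ℝ (Fin 2))
    (hd₁ : d₁ ∈ segment ℝ a₁ b) (hd₁0 : d₁ 0 = T)
    (hd₂ : d₂ ∈ segment ℝ a₂ c) (hd₂0 : d₂ 0 = T) :
    μ / 3 ≤ dist d₁ d₂ := by
  have hT0 : 0 < T := hμ.trans hT
  have key : |d₁ 1 - d₂ 1| ≤ dist d₁ d₂ := by
    rw [EuclideanSpace.dist_eq, Fin.sum_univ_two, ← Real.sqrt_sq_eq_abs]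
    apply Real.sqrt_le_sqrt
    simp only [Real.dist_eq, sq_abs]
    nlinarith [sq_nonneg (d₁ 0 - d₂ 0)]
  obtain ⟨u₁, v₁, hu₁, hv₁, huv₁, hd1⟩ := hd₁
  obtain ⟨u₂, v₂, hu₂, hv₂, huv₂, hd2⟩ := hd₂
  have hb0 : b 0 = a₃ 0 := by rcases hbc with ⟨hb, _⟩ | ⟨hb, _⟩ <;> rw [hb]; rw [h34]
  have hc0 : c 0 = a₃ 0 := by rcases hbc with ⟨_, hc⟩ | ⟨_, hc⟩ <;> rw [hc]; rw [h34]
  have hx3l : -T ≤ a₃ 0 := neg_le_of_abs_le ha₃B.1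
  have hx3u : a₃ 0 ≤ T := le_of_abs_le ha₃B.1
  have h5x : 0 < 5 * T - a₃ 0 := by linarith
  have e1 : u₁ * a₁ 0 + v₁ * b 0 = d₁ 0 := by
    have := congrArg (fun x => x 0) hd1; simpa using this
  have e2 : u₂ * a₂ 0 + v₂ * c 0 = d₂ 0 := by
    have := congrArg (fun x => x 0) hd2; simpa using this
  rw [ha₁0, hb0, hd₁0] at e1
  rw [ha₂0, hc0, hd₂0] at e2
  have hV1 : v₁ * (5 * T - a₃ 0) = 4 * T := by linear_combination 5 * T * huv₁ - e1
  have hV2 : v₂ * (5 * T - a₃ 0) = 4 * T := by linear_combination 5 * T * huv₂ - e2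
  have hveq : v₁ = v₂ := mul_right_cancel₀ (ne_of_gt h5x) (hV1.trans hV2.symm)
  have hvlb : 2 / 3 ≤ v₁ := by nlinarith [mul_nonneg hv₁ (by linarith : (0:ℝ) ≤ a₃ 0 + T)]
  have hvub : v₁ ≤ 1 := by nlinarith [mul_nonneg hv₁ (by linarith : (0:ℝ) ≤ T - a₃ 0)]
  have f1 : u₁ * a₁ 1 + v₁ * b 1 = d₁ 1 := by
    have := congrArg (fun x => x 1) hd1; simpa using this
  have f2 : u₂ * a₂ 1 + v₂ * c 1 = d₂ 1 := by
    have := congrArg (fun x => x 1) hd2; simpa using this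
  clear hd1 hd2
  obtain ⟨h1l, h1u⟩ := h1I
  obtain ⟨h2l, h2u⟩ := h2I
  subst hveq
  have hu1 : u₁ = 1 - v₁ := by linarith
  have hu2 : u₂ = 1 - v₁ := by linarith
  subst hu1; subst hu2
  have hA : 0 ≤ (v₁ - 2/3) * (a₄ 1 - a₃ 1 - μ) :=
    mul_nonneg (by linarith) (by linarith)
  have hB : 0 ≤ (v₁ - 2/3) * μ := mul_nonneg (by linarith) hμ.le
  rcases hbc with ⟨hb, hc⟩ | ⟨hb, hc⟩
  · subst hb; subst hc
    have hC : 0 ≤ (1 - v₁) * (a₂ 1 - a₁ 1) := mul_nonneg (by linarith) (by linarith)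
    have hmain : μ / 3 ≤ d₂ 1 - d₁ 1 := by linarith [hA, hB, hC, f1, f2, h34y]
    calc μ / 3 ≤ d₂ 1 - d₁ 1 := hmain
      _ ≤ |d₁ 1 - d₂ 1| := by rw [abs_sub_comm]; exact le_abs_self _
      _ ≤ dist d₁ d₂ := key
  · subst hb; subst hc
    have hC : 0 ≤ (1 - v₁) * (μ - (a₂ 1 - a₁ 1)) := mul_nonneg (by linarith) (by linarith)
    have hmain : μ / 3 ≤ d₁ 1 - d₂ 1 := by linarith [hA, hB, hC, f1, f2, h34y]
    calc μ / 3 ≤ d₁ 1 - d₂ 1 := hmain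
      _ ≤ |d₁ 1 - d₂ 1| := le_abs_self _
      _ ≤ dist d₁ d₂ := key
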